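/- Define the symmetric traceless divergence div̂ on smooth maps m : ℝ³ → Sym₀(3) (symmetric traceless 3×3 real matrices) by (div̂ m)ⱼ = Σᵢ ∂ᵢ mᵢⱼ. Let φ₂(m ⊕ n) be the complex symmetric 2-tensor with components (m_{jk} + i n_{jk}) ε_{jab} ε_{kpq} relative to the frame dx^a∧dx^b ⊗ dx^p∧dx^q (summed over repeated indices), and let φ₃(v ⊕ w) have components 2(vⱼ + i wⱼ) ε_{jpq} relative to dx¹∧dx²∧dx³ ⊗ dx^p∧dx^q. Then for all smooth symmetric traceless matrix fields m, n, the first-order operator d_i defined by d_i(u) = Σᵢ dxⁱ ∇_{∂ᵢ} u satisfies d_i(φ₂(m ⊕ n)) = φ₃(div̂ m ⊕ div̂ n). -/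

import Mathlib

open scoped ComplexConjugate

/-- The Levi-Civita symbol on `Fin 3`, with `eps 0 1 2 = 1`. -/
noncomputable def eps (i j k : Fin 3) : ℝ :=
  (((j.val : ℝ) - (i.val : ℝ)) * ((k.val : ℝ) - (j.val : ℝ)) *
    ((k.val : ℝ) - (i.val : ℝ))) / 2

/-- The symmetric traceless divergence `(div̂ m)ⱼ = Σᵢ ∂ᵢ mᵢⱼ`. -/
noncomputable def divHat (m : (Fin 3 → ℝ) → Matrix (Fin 3) (Fin 3) ℝ)
    (x : Fin 3 → ℝ) (j : Fin 3) : ℝ :=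
  ∑ i, fderiv ℝ (fun y => m y i j) x (Pi.single i 1)

/-- Auxiliary: the `fderiv` of the inner sum, computed termwise. -/
lemma fderiv_inner_sum (m n : (Fin 3 → ℝ) → Matrix (Fin 3) (Fin 3) ℝ)
    (hm_diff : ∀ j k, Differentiable ℝ (fun x => m x j k))
    (hn_diff : ∀ j k, Differentiable ℝ (fun x => n x j k))
    (x : Fin 3 → ℝ) (a b p q i : Fin 3) :
    fderiv ℝ (fun y => ∑ j, ∑ k,
        ((m y j k : ℂ) + Complex.I * (n y j k : ℂ)) * (eps j a b : ℂ) * (eps k p q : ℂ))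
      x (Pi.single i 1)
    = ∑ j, ∑ k,
        (((fderiv ℝ (fun y => m y j k) x (Pi.single i 1) : ℝ) : ℂ)
          + Complex.I * ((fderiv ℝ (fun y => n y j k) x (Pi.single i 1) : ℝ) : ℂ))
        * (eps j a b : ℂ) * (eps k p q : ℂ) := by
  have H : HasFDerivAt (fun y => ∑ j, ∑ k,
      ((m y j k : ℂ) + Complex.I * (n y j k : ℂ)) * (eps j a b : ℂ) * (eps k p q : ℂ))
      (∑ j : Fin 3, ∑ k : Fin 3,
        ((eps j a b : ℂ) * (eps k p q : ℂ)) •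
          (Complex.ofRealCLM.comp (fderiv ℝ (fun y => m y j k) x)
            + Complex.I • Complex.ofRealCLM.comp (fderiv ℝ (fun y => n y j k) x))) x := by
    apply HasFDerivAt.fun_sum
    intro j _
    apply HasFDerivAt.fun_sum
    intro k _
    have hm' : HasFDerivAt (fun y => ((m y j k : ℝ) : ℂ))
        (Complex.ofRealCLM.comp (fderiv ℝ (fun y => m y j k) x)) x :=
      Complex.ofRealCLM.hasFDerivAt.comp x ((hm_diff j k x).hasFDerivAt)
    have hn' : HasFDerivAt (fun y => Complex.I * ((n y j k : ℝ) : ℂ))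
        (Complex.I • Complex.ofRealCLM.comp (fderiv ℝ (fun y => n y j k) x)) x :=
      (Complex.ofRealCLM.hasFDerivAt.comp x ((hn_diff j k x).hasFDerivAt)).const_mul _
    have h := ((hm'.add hn').mul_const ((eps j a b : ℂ))).mul_const ((eps k p q : ℂ))
    refine h.congr_fderiv ?_
    ext v
    simp [ContinuousLinearMap.smul_apply]
    ring
  rw [H.fderiv]
  simp [ContinuousLinearMap.sum_apply, ContinuousLinearMap.smul_apply]
  ring_nf
  congr 1 <;> (ext j; congr 1; ext k; ring)

/- Auxiliary: the purely algebraic epsilon-contraction identity. -/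
set_option maxHeartbeats 2000000 in
lemma eps_contraction (Dm Dn : Fin 3 → Fin 3 → Fin 3 → ℝ) (p q : Fin 3) :
    ∑ i, ∑ a, ∑ b, (eps i a b : ℂ) *
      (∑ j, ∑ k, (((Dm i j k : ℝ):ℂ) + Complex.I * ((Dn i j k : ℝ):ℂ))
        * (eps j a b : ℂ) * (eps k p q : ℂ))
    = ∑ j, 2 * (((∑ i, Dm i i j : ℝ):ℂ) + Complex.I * ((∑ i, Dn i i j : ℝ):ℂ)) * (eps j p q : ℂ) := by
  fin_cases p <;> fin_cases q <;>
    · simp only [Fin.sum_univ_three]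
      norm_num [eps]
      try push_cast
      try ring

/-- On `ℝ³` with the flat connection, the first-order operator
`d_i(u) = Σᵢ dxⁱ ∇_{∂ᵢ} u` intertwines the isomorphisms `φ₂, φ₃` with the symmetric
traceless divergence: `d_i(φ₂(m ⊕ n)) = φ₃(div̂ m ⊕ div̂ n)`.  In components relative to
the frames `dx^a∧dx^b ⊗ dx^p∧dx^q` and `dx¹∧dx²∧dx³ ⊗ dx^p∧dx^q` this is the identity
`Σ_{i,a,b} ε_{iab} ∂ᵢ[(m_{jk}+i n_{jk}) ε_{jab} ε_{kpq}] = 2((div̂ m)ⱼ + i(div̂ n)ⱼ) ε_{jpq}`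
(summed over repeated indices). -/
theorem stmt_6
    (m n : (Fin 3 → ℝ) → Matrix (Fin 3) (Fin 3) ℝ)
    (hm_diff : ∀ j k, Differentiable ℝ (fun x => m x j k))
    (hn_diff : ∀ j k, Differentiable ℝ (fun x => n x j k))
    (hm_symm : ∀ x j k, m x j k = m x k j)
    (hn_symm : ∀ x j k, n x j k = n x k j)
    (hm_tr : ∀ x, ∑ j, m x j j = 0)
    (hn_tr : ∀ x, ∑ j, n x j j = 0) :
    ∀ (x : Fin 3 → ℝ) (p q : Fin 3),
      ∑ i, ∑ a, ∑ b, (eps i a b : ℂ) *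
        fderiv ℝ (fun y => ∑ j, ∑ k,
            ((m y j k : ℂ) + Complex.I * (n y j k : ℂ)) * (eps j a b : ℂ) * (eps k p q : ℂ))
          x (Pi.single i 1)
      = ∑ j, 2 * ((divHat m x j : ℂ) + Complex.I * (divHat n x j : ℂ)) * (eps j p q : ℂ) := by
  intro x p q
  simp only [fderiv_inner_sum m n hm_diff hn_diff x]
  simp only [divHat]
  exact eps_contraction (fun i j k => fderiv ℝ (fun y => m y j k) x (Pi.single i 1))
    (fun i j k => fderiv ℝ (fun y => n y j k) x (Pi.single i 1)) p q
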